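/- Let K be a finite field with q elements, let L be a field extension of K of degree n, let α ∈ L be a primitive element (a generator of Lˣ), let p be the minimal polynomial of α over K, and let C be the companion matrix of p. If t is a positive integer with gcd(t, q^n − 1) = 1, then there exist an injective ring homomorphism ψ' from L to the ring of n×n matrices over K and a primitive element β of L such that ψ'(β) = C^t and the range of ψ' is exactly {0} ∪ {C^i : 0 ≤ i ≤ q^n − 2}. -/

import Mathlib

/-- The companion matrix of a monic polynomial
`p = X^n + c_{n-1} X^{n-1} + ⋯ + c_1 X + c_0`: its `(i, n-1)` entry is `-c_i`,
its `(i+1, i)` entries are `1`, and all other entries are `0`. -/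
def companionMatrix {K : Type*} [Field K] (n : ℕ) (p : Polynomial K) :
    Matrix (Fin n) (Fin n) K :=
  Matrix.of fun i j =>
    if (j : ℕ) = n - 1 then -p.coeff i
    else if (i : ℕ) = (j : ℕ) + 1 then 1 else 0

/-- Let `K` be a finite field with `q` elements, `L` a degree-`n` extension of `K`, `α ∈ L` a
primitive element with minimal polynomial `p` over `K`, and `C` the companion matrix of `p`.
If `t` is a positive integer with `gcd(t, q^n - 1) = 1`, then there are an injective ring
homomorphism `ψ' : L →+* Matₙ(K)` and a primitive element `β` of `L` with `ψ' β = C^t` and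
range of `ψ'` equal to `{0} ∪ {C^i : 0 ≤ i ≤ q^n - 2}`. -/
theorem exists_ringHom_to_companion_pow {K L : Type*} [Field K] [Fintype K] [Field L]
    [Fintype L] [Algebra K L] {q n : ℕ} (hq : Fintype.card K = q)
    (hn : Module.finrank K L = n)
    (α : L) (hα : ∀ x : L, x ≠ 0 → ∃ i : ℕ, x = α ^ i)
    (t : ℕ) (ht : 0 < t) (hgcd : Nat.gcd t (q ^ n - 1) = 1) :
    ∃ (ψ' : L →+* Matrix (Fin n) (Fin n) K) (β : L),
      Function.Injective ψ' ∧
      (∀ x : L, x ≠ 0 → ∃ i : ℕ, x = β ^ i) ∧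
      ψ' β = companionMatrix n (minpoly K α) ^ t ∧
      Set.range ψ' =
        {0} ∪ {M | ∃ i : ℕ, i ≤ q ^ n - 2 ∧ M = companionMatrix n (minpoly K α) ^ i} := by
  classical
  subst hq
  subst hn
  set n := Module.finrank K L with hn
  set q := Fintype.card K with hq
  have hint : IsIntegral K α := IsIntegral.of_finite K α
  have htop : IntermediateField.adjoin K {α} = ⊤ := by
    rw [eq_top_iff]
    intro x _
    by_cases hx : x = 0
    · rw [hx]; exact zero_mem _
    · obtain ⟨i, rfl⟩ := hα x hx
      exact pow_mem (IntermediateField.mem_adjoin_simple_self K α) i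
  set pb0 := IntermediateField.adjoin.powerBasis hint with hpb0
  let e : ↥(IntermediateField.adjoin K {α}) ≃ₐ[K] L := (IntermediateField.equivOfEq htop).trans IntermediateField.topEquiv
  set pb := pb0.map e with hpb
  have hgen : pb.gen = α := by
    rw [hpb, PowerBasis.map_gen, hpb0, IntermediateField.adjoin.powerBasis_gen]
    rfl
  have hdim : pb.dim = n := (PowerBasis.finrank pb).symm
  set b : Module.Basis (Fin n) K L := pb.basis.reindex (finCongr hdim) with hbdef
  have hb : ∀ i : Fin n, b i = α ^ (i : ℕ) := by
    intro i
    rw [hbdef, Module.Basis.reindex_apply, PowerBasis.coe_basis, hgen]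
    rfl
  set p := minpoly K α with hp
  have hpmonic : p.Monic := minpoly.monic hint
  have hpdeg : p.natDegree = n := by
    rw [hp, ← hgen, pb.natDegree_minpoly, hdim]
  have hn1 : 0 < n := Module.finrank_pos
  have hq2 : 2 ≤ q := Fintype.one_lt_card
  have hqn2 : 2 ≤ q ^ n := hq2.trans (Nat.le_self_pow hn1.ne' q)
  -- key : α ^ n as linear combination
  have key : α ^ n = ∑ k : Fin n, (-(p.coeff (k : ℕ))) • α ^ (k : ℕ) := by
    have h0 : (Polynomial.aeval α) p = 0 := minpoly.aeval K α
    rw [Polynomial.aeval_eq_sum_range, hpdeg, Finset.sum_range_succ] at h0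
    have hcn : p.coeff n = 1 := by rw [← hpdeg]; exact hpmonic.coeff_natDegree
    rw [hcn, one_smul] at h0
    have h1 : α ^ n = -∑ i ∈ Finset.range n, p.coeff i • α ^ i :=
      eq_neg_of_add_eq_zero_right h0
    rw [h1, Fin.sum_univ_eq_sum_range (fun k => (-(p.coeff k)) • α ^ k) n,
      ← Finset.sum_neg_distrib]
    simp [neg_smul]
  have hrepr : ∀ i : Fin n, b.repr (α ^ n) i = -(p.coeff (i : ℕ)) := by
    intro i
    have hkey2 : α ^ n = ∑ k : Fin n, (-(p.coeff (k : ℕ))) • b k := by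
      rw [key]; exact Finset.sum_congr rfl (fun k _ => by rw [hb k])
    rw [hkey2]
    rw [show ⇑(b.repr (∑ k : Fin n, (-(p.coeff (k : ℕ))) • b k)) = fun k : Fin n => -(p.coeff (k : ℕ)) from
      b.repr_sum_self _]
  have hC : Algebra.leftMulMatrix b α = companionMatrix n p := by
    ext i j
    rw [Algebra.leftMulMatrix_eq_repr_mul, hb j, ← pow_succ']
    by_cases hj : (j : ℕ) = n - 1
    · have hjj : (j : ℕ) + 1 = n := by omega
      rw [hjj, hrepr i]
      simp [companionMatrix, hj]
    · have hjn : (j : ℕ) + 1 < n := by have := j.isLt; omega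
      have hbe : α ^ ((j : ℕ) + 1) = b ⟨(j : ℕ) + 1, hjn⟩ := (hb ⟨(j : ℕ) + 1, hjn⟩).symm
      rw [hbe, Module.Basis.repr_self]
      simp only [companionMatrix, Matrix.of_apply, hj, if_false]
      rw [Finsupp.single_apply]
      by_cases hi : (i : ℕ) = (j : ℕ) + 1
      · have : (⟨(j : ℕ) + 1, hjn⟩ : Fin n) = i := Fin.ext hi.symm
        simp [this, hi]
      · have : (⟨(j : ℕ) + 1, hjn⟩ : Fin n) ≠ i := by
          intro h; apply hi; rw [← h]
        simp [this, hi]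
  haveI : Nonempty (Fin n) := ⟨⟨0, hn1⟩⟩
  set ψ' := (Algebra.leftMulMatrix b).toRingHom with hψ'
  have hψα : ψ' α = companionMatrix n p := hC
  have hcard : Fintype.card L = q ^ n := Module.card_eq_pow_finrank
  set m := q ^ n - 1 with hm
  have hm1 : 1 ≤ m := by omega
  have hαm : α ≠ 0 → α ^ m = 1 := fun h => by
    have := FiniteField.pow_card_sub_one_eq_one α h
    rwa [hcard] at this
  have hαpow : α ≠ 0 → ∀ a : ℕ, α ^ a = α ^ (a % m) := by
    intro h a
    conv_lhs => rw [← Nat.div_add_mod a m]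
    rw [pow_add, pow_mul, hαm h, one_pow, one_mul]
  have hred : ∀ x : L, x ≠ 0 → ∃ j : ℕ, j ≤ q ^ n - 2 ∧ x = α ^ j := by
    intro x hx
    obtain ⟨j, rfl⟩ := hα x hx
    by_cases hα0 : α = 0
    · have hj0 : j = 0 := by
        by_contra hj
        exact hx (by rw [hα0, zero_pow hj])
      exact ⟨0, by omega, by rw [hj0]⟩
    · refine ⟨j % m, ?_, hαpow hα0 j⟩
      have := Nat.mod_lt j (show 0 < m by omega)
      omega
  refine ⟨ψ', α ^ t, ?_, ?_, ?_, ?_⟩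
  · exact RingHom.injective ψ'
  · intro x hx
    obtain ⟨j, rfl⟩ := hα x hx
    by_cases hα0 : α = 0
    · have hj0 : j = 0 := by
        by_contra hj
        exact hx (by rw [hα0, zero_pow hj])
      exact ⟨0, by rw [hj0]; simp⟩
    · haveI : NeZero m := ⟨by omega⟩
      have hcop : Nat.Coprime t m := hgcd
      let u : (ZMod m)ˣ := ZMod.unitOfCoprime t hcop
      set i := ((u⁻¹ : (ZMod m)ˣ) * (j : ZMod m) : ZMod m).val with hi
      refine ⟨i, ?_⟩
      have hmod : t * i ≡ j [MOD m] := by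
        rw [← ZMod.natCast_eq_natCast_iff]
        push_cast
        rw [hi, ZMod.natCast_val, ZMod.cast_id]
        have hu : (t : ZMod m) = (u : ZMod m) := rfl
        rw [hu, ← mul_assoc]
        simp
      rw [← pow_mul, hαpow hα0 (t * i), hαpow hα0 j, hmod]
  · rw [hψ']
    simp only [AlgHom.toRingHom_eq_coe, RingHom.coe_coe, map_pow]
    rw [hC]
  · ext M
    constructor
    · rintro ⟨x, rfl⟩
      by_cases hx : x = 0
      · left; rw [hx, map_zero]; rfl
      · right
        obtain ⟨j, hj1, rfl⟩ := hred x hx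
        exact ⟨j, hj1, by rw [map_pow, hψα]⟩
    · rintro (h0 | ⟨i, hi, rfl⟩)
      · exact ⟨0, by rw [map_zero]; exact h0.symm ▸ rfl⟩
      · exact ⟨α ^ i, by rw [map_pow, hψα]⟩
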